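/- Let (u*, v*) solve the linear system (R₁₁ + γB₁ᵀPB₁)u* + γB₁ᵀPB₂v* = −γB₁ᵀPAx and γB₂ᵀPB₁u* + (R₁₂ + γB₂ᵀPB₂)v* = −γB₂ᵀPAx for all x ∈ ℝⁿ, with u* = −K₁x, v* = −K₂x. Then the minimum value xᵀQ₁x + u*ᵀR₁₁u* + v*ᵀR₁₂v* + γ(Ax+B₁u*+B₂v*)ᵀP(Ax+B₁u*+B₂v*) equals xᵀP₊x where P₊ = Q₁ + γAᵀPA − γ²[AᵀPB₁ AᵀPB₂]·G⁻¹·[B₁ᵀPA; B₂ᵀPA] and G is the 2×2 block matrix [R₁₁+γB₁ᵀPB₁, γB₁ᵀPB₂; γB₂ᵀPB₁, R₁₂+γB₂ᵀPB₂]. -/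

import Mathlib

open Matrix

theorem stmt_16 {n m1 m2 : ℕ}
    (A Q₁ P : Matrix (Fin n) (Fin n) ℝ) (B₁ : Matrix (Fin n) (Fin m1) ℝ)
    (B₂ : Matrix (Fin n) (Fin m2) ℝ)
    (R₁₁ : Matrix (Fin m1) (Fin m1) ℝ) (R₁₂ : Matrix (Fin m2) (Fin m2) ℝ)
    (γ : ℝ) (hγ : 0 < γ)
    (hQ : Q₁.PosSemidef) (hP : P.PosSemidef) (hR11 : R₁₁.PosDef) (hR12 : R₁₂.PosDef)
    (K₁ : Matrix (Fin m1) (Fin n) ℝ) (K₂ : Matrix (Fin m2) (Fin n) ℝ)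
    (hFOC : ∀ x : Fin n → ℝ,
      (R₁₁ + γ • (B₁ᵀ * P * B₁)) *ᵥ (-(K₁ *ᵥ x)) + (γ • (B₁ᵀ * P * B₂)) *ᵥ (-(K₂ *ᵥ x))
          = -((γ • (B₁ᵀ * P * A)) *ᵥ x)
      ∧ (γ • (B₂ᵀ * P * B₁)) *ᵥ (-(K₁ *ᵥ x)) + (R₁₂ + γ • (B₂ᵀ * P * B₂)) *ᵥ (-(K₂ *ᵥ x))
          = -((γ • (B₂ᵀ * P * A)) *ᵥ x))
    (G : Matrix (Fin m1 ⊕ Fin m2) (Fin m1 ⊕ Fin m2) ℝ)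
    (hG : G = fromBlocks (R₁₁ + γ • (B₁ᵀ * P * B₁)) (γ • (B₁ᵀ * P * B₂))
                         (γ • (B₂ᵀ * P * B₁)) (R₁₂ + γ • (B₂ᵀ * P * B₂)))
    (hGinv : IsUnit G.det)
    (Pplus : Matrix (Fin n) (Fin n) ℝ)
    (hPplus : Pplus = Q₁ + γ • (Aᵀ * P * A)
      - (γ * γ) • (fromCols (Aᵀ * P * B₁) (Aᵀ * P * B₂) * G⁻¹
          * fromRows (B₁ᵀ * P * A) (B₂ᵀ * P * A))) :
    ∀ x : Fin n → ℝ,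
      x ⬝ᵥ (Q₁ *ᵥ x) + (-(K₁ *ᵥ x)) ⬝ᵥ (R₁₁ *ᵥ (-(K₁ *ᵥ x)))
        + (-(K₂ *ᵥ x)) ⬝ᵥ (R₁₂ *ᵥ (-(K₂ *ᵥ x)))
        + γ * ((A *ᵥ x + B₁ *ᵥ (-(K₁ *ᵥ x)) + B₂ *ᵥ (-(K₂ *ᵥ x))) ⬝ᵥ
            (P *ᵥ (A *ᵥ x + B₁ *ᵥ (-(K₁ *ᵥ x)) + B₂ *ᵥ (-(K₂ *ᵥ x)))))
      = x ⬝ᵥ (Pplus *ᵥ x) := by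
  intro x
  obtain ⟨eq1, eq2⟩ := hFOC x
  set u : Fin m1 → ℝ := -(K₁ *ᵥ x) with hu
  set v : Fin m2 → ℝ := -(K₂ *ᵥ x) with hv
  set a : Fin n → ℝ := A *ᵥ x with ha
  set b1 : Fin n → ℝ := B₁ *ᵥ u with hb1
  set b2 : Fin n → ℝ := B₂ *ᵥ v with hb2
  -- P is symmetric
  have hPt : Pᵀ = P := by
    ext i j
    have := congrFun (congrFun hP.1 i) j
    simpa using this
  -- symmetry of quadratic form
  have hsym : ∀ y z : Fin n → ℝ, y ⬝ᵥ (P *ᵥ z) = z ⬝ᵥ (P *ᵥ y) := by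
    intro y z
    rw [dotProduct_mulVec, ← mulVec_transpose, hPt, dotProduct_comm]
  -- transpose-dot lemma
  have htr1 : ∀ (z : Fin n → ℝ) (y : Fin m1 → ℝ), y ⬝ᵥ (B₁ᵀ *ᵥ z) = (B₁ *ᵥ y) ⬝ᵥ z := by
    intro z y; rw [dotProduct_mulVec, vecMul_transpose]
  have htr2 : ∀ (z : Fin n → ℝ) (y : Fin m2 → ℝ), y ⬝ᵥ (B₂ᵀ *ᵥ z) = (B₂ *ᵥ y) ⬝ᵥ z := by
    intro z y; rw [dotProduct_mulVec, vecMul_transpose]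
  have htrA : ∀ (z : Fin n → ℝ), x ⬝ᵥ (Aᵀ *ᵥ z) = a ⬝ᵥ z := by
    intro z; rw [dotProduct_mulVec, vecMul_transpose]
  -- scalar consequences of the FOC
  have e1 : u ⬝ᵥ (R₁₁ *ᵥ u) + γ * (b1 ⬝ᵥ (P *ᵥ b1)) + γ * (b1 ⬝ᵥ (P *ᵥ b2))
      = -(γ * (b1 ⬝ᵥ (P *ᵥ a))) := by
    have h := congrArg (fun z => u ⬝ᵥ z) eq1
    simp only [dotProduct_add, add_mulVec, smul_mulVec, dotProduct_smul,
      dotProduct_neg, smul_eq_mul, ← mulVec_mulVec, htr1] at h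
    linarith [h]
  have e2 : v ⬝ᵥ (R₁₂ *ᵥ v) + γ * (b2 ⬝ᵥ (P *ᵥ b1)) + γ * (b2 ⬝ᵥ (P *ᵥ b2))
      = -(γ * (b2 ⬝ᵥ (P *ᵥ a))) := by
    have h := congrArg (fun z => v ⬝ᵥ z) eq2
    simp only [dotProduct_add, add_mulVec, smul_mulVec, dotProduct_smul,
      dotProduct_neg, smul_eq_mul, ← mulVec_mulVec, htr2] at h
    linarith [h]
  -- the combined FOC as a block system
  set w : Fin m1 ⊕ Fin m2 → ℝ := Sum.elim u v with hwdef
  have hGw : G *ᵥ w = -(γ • (fromRows (B₁ᵀ * P * A) (B₂ᵀ * P * A) *ᵥ x)) := by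
    rw [hG, hwdef, fromBlocks_mulVec, fromRows_mulVec]
    simp only [Sum.elim_comp_inl, Sum.elim_comp_inr]
    ext (i | i)
    · simpa [smul_mulVec] using congrFun eq1 i
    · simpa [smul_mulVec] using congrFun eq2 i
  have hinv : G⁻¹ *ᵥ (fromRows (B₁ᵀ * P * A) (B₂ᵀ * P * A) *ᵥ x) = (-(γ⁻¹)) • w := by
    have h := congrArg (fun z => G⁻¹ *ᵥ z) hGw
    simp only [mulVec_mulVec, Matrix.nonsing_inv_mul G hGinv, one_mulVec,
      mulVec_neg, mulVec_smul] at h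
    have hγ' : γ ≠ 0 := ne_of_gt hγ
    rw [mulVec_mulVec, h, neg_smul, smul_neg, neg_neg, smul_smul,
      inv_mul_cancel₀ hγ', one_smul]
  -- expand the RHS
  have hRHS : x ⬝ᵥ (Pplus *ᵥ x)
      = x ⬝ᵥ (Q₁ *ᵥ x) + γ * (a ⬝ᵥ (P *ᵥ a)) + γ * (a ⬝ᵥ (P *ᵥ b1)) + γ * (a ⬝ᵥ (P *ᵥ b2)) := by
    rw [hPplus]
    rw [sub_mulVec, add_mulVec, smul_mulVec, smul_mulVec]
    rw [show (fromCols (Aᵀ * P * B₁) (Aᵀ * P * B₂) * G⁻¹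
          * fromRows (B₁ᵀ * P * A) (B₂ᵀ * P * A)) *ᵥ x
        = fromCols (Aᵀ * P * B₁) (Aᵀ * P * B₂) *ᵥ (G⁻¹ *ᵥ (fromRows (B₁ᵀ * P * A) (B₂ᵀ * P * A) *ᵥ x))
      from by rw [mulVec_mulVec, mulVec_mulVec]]
    rw [hinv, mulVec_smul, hwdef, fromCols_mulVec_sumElim]
    simp only [dotProduct_sub, dotProduct_add, dotProduct_smul, smul_eq_mul,
      ← mulVec_mulVec, htrA]
    simp only [← mulVec_mulVec, ← hu, ← hv, ← ha, ← hb1, ← hb2]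
    have hγ' : γ ≠ 0 := ne_of_gt hγ
    field_simp
    ring
  rw [hRHS]
  -- expand the LHS quadratic
  have hexp : (a + b1 + b2) ⬝ᵥ (P *ᵥ (a + b1 + b2))
      = a ⬝ᵥ (P *ᵥ a) + a ⬝ᵥ (P *ᵥ b1) + a ⬝ᵥ (P *ᵥ b2)
        + b1 ⬝ᵥ (P *ᵥ a) + b1 ⬝ᵥ (P *ᵥ b1) + b1 ⬝ᵥ (P *ᵥ b2)
        + b2 ⬝ᵥ (P *ᵥ a) + b2 ⬝ᵥ (P *ᵥ b1) + b2 ⬝ᵥ (P *ᵥ b2) := by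
    simp only [mulVec_add, dotProduct_add, add_dotProduct]
    ring
  rw [hexp]
  have s1 := hsym a b1
  have s2 := hsym a b2
  linarith [e1, e2]
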